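/- Let H_L^ω = Δ_L + V_L^ω be the finite-volume discrete Schrödinger operator on ℓ²(Λ_L) with V^ω(n) = ω_n/(1+|n|)^α, where (ω_n) are i.i.d. with density (δ/2)|x|^{-(1+δ)} for |x|>1 and 0 < αδ < d. With Γ_L = (2L+1)^{(d−αδ)/δ} and b = lim_L Γ_L^{-δ}∑_{n∈Λ_L}(1+|n|)^{-αδ}, the largest eigenvalue E_L^max of H_L^ω satisfies: lim_{L→∞} P(E_L^max/Γ_L ≤ x) = exp(−b/(2x^δ)) for x > 0 and = 0 for x ≤ 0. -/

import Mathlib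

open MeasureTheory ProbabilityTheory Filter

/-- The cube Λ_L = {n ∈ ℤ^d : |n_i| ≤ L for all i}. -/
noncomputable def cube (d L : ℕ) : Finset (Fin d → ℤ) :=
  Finset.Icc (fun _ => -(L : ℤ)) (fun _ => (L : ℤ))

/-- Finite-volume discrete Laplacian Δ_L on ℓ²(Λ_L). -/
noncomputable def lapMat (d L : ℕ) : Matrix (cube d L) (cube d L) ℝ :=
  fun n m => if (∑ i, |(n : Fin d → ℤ) i - (m : Fin d → ℤ) i|) = 1 then 1 else 0

/-- Finite-volume decaying potential V_L, diagonal with entries v(n)/(1+|n|)^α. -/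
noncomputable def potMat (d L : ℕ) (α : ℝ) (v : (Fin d → ℤ) → ℝ) :
    Matrix (cube d L) (cube d L) ℝ :=
  Matrix.diagonal (fun n => v n / (1 + ‖(n : Fin d → ℤ)‖) ^ α)

section Aux
open Finset Set
open scoped ENNReal Topology
local notation "⟪" x ", " y "⟫_ℝ" => @inner ℝ _ _ x y

section Matrixpart
variable {ι : Type*} [Fintype ι] [DecidableEq ι]


variable {ι : Type*} [Fintype ι] [DecidableEq ι]

lemma quad_eq_sum_eigen {A : Matrix ι ι ℝ} (hA : A.IsHermitian) (z : EuclideanSpace ℝ ι) :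
    ⟪z, Matrix.toEuclideanLin A z⟫_ℝ = ∑ i, hA.eigenvalues i * (hA.eigenvectorBasis.repr z i)^2 := by
  set b := hA.eigenvectorBasis with hb
  have hTb : ∀ i, Matrix.toEuclideanLin A (b i) = hA.eigenvalues i • (b i) := by
    intro i
    apply (WithLp.equiv 2 (ι → ℝ)).injective
    simpa [Matrix.toEuclideanLin_apply] using hA.mulVec_eigenvectorBasis i
  have hz : Matrix.toEuclideanLin A z = ∑ i, (b.repr z i * hA.eigenvalues i) • b i := by
    conv_lhs => rw [← b.sum_repr z]
    rw [map_sum]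
    refine Finset.sum_congr rfl fun i _ => ?_
    rw [_root_.map_smul, hTb i, smul_smul]
  rw [hz, inner_sum]
  refine Finset.sum_congr rfl fun i _ => ?_
  rw [inner_smul_right, real_inner_comm, b.repr_apply_apply]
  ring

lemma inner_self_eq_sum_repr_sq {A : Matrix ι ι ℝ} (hA : A.IsHermitian) (z : EuclideanSpace ℝ ι) :
    ⟪z, z⟫_ℝ = ∑ i, (hA.eigenvectorBasis.repr z i)^2 := by
  rw [← hA.eigenvectorBasis.repr.inner_map_map z z, PiLp.inner_apply]
  simp [sq]

lemma diag_le_sup_eigenvalues {A : Matrix ι ι ℝ} (hA : A.IsHermitian)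
    (hne : (univ : Finset ι).Nonempty) (n : ι) :
    A n n ≤ univ.sup' hne hA.eigenvalues := by
  set y : EuclideanSpace ℝ ι := EuclideanSpace.single n 1 with hy
  have h1 : ⟪y, Matrix.toEuclideanLin A y⟫_ℝ = A n n := by
    rw [EuclideanSpace.inner_single_left]
    simp only [Matrix.toEuclideanLin_apply, hy, EuclideanSpace.ofLp_single]
    simp [Matrix.mulVec_single]
  have h2 : ⟪y, y⟫_ℝ = 1 := by
    rw [EuclideanSpace.inner_single_left]
    simp [hy, EuclideanSpace.single_apply]
  have h3 := quad_eq_sum_eigen hA y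
  have h4 := inner_self_eq_sum_repr_sq hA y
  rw [h1] at h3
  rw [h2] at h4
  calc A n n = ∑ i, hA.eigenvalues i * (hA.eigenvectorBasis.repr y i)^2 := h3
    _ ≤ ∑ i, (univ.sup' hne hA.eigenvalues) * (hA.eigenvectorBasis.repr y i)^2 := by
        refine Finset.sum_le_sum fun i _ => ?_
        exact mul_le_mul_of_nonneg_right (Finset.le_sup' _ (mem_univ i)) (sq_nonneg _)
    _ = (univ.sup' hne hA.eigenvalues) * ∑ i, (hA.eigenvectorBasis.repr y i)^2 := by
        rw [Finset.mul_sum]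
    _ = _ := by rw [← h4]; ring



variable {ι : Type*} [Fintype ι] [DecidableEq ι]

lemma eigenvalue_le_gershgorin {A : Matrix ι ι ℝ} (hA : A.IsHermitian) (j : ι) (c r : ℝ)
    (hdiag : ∀ n, A n n ≤ c) (hrow : ∀ n, ∑ m ∈ univ.erase n, |A n m| ≤ r) :
    hA.eigenvalues j ≤ c + r := by
  set v : ι → ℝ := ⇑(hA.eigenvectorBasis j) with hv
  have hv0 : v ≠ 0 := by
    intro h
    have := hA.eigenvectorBasis.orthonormal.ne_zero j
    apply this
    ext i
    exact congrFun h i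
  obtain ⟨n₀, hn₀⟩ : ∃ n, v n ≠ 0 := by
    by_contra h
    push_neg at h
    exact hv0 (funext h)
  have hne : (univ : Finset ι).Nonempty := ⟨n₀, mem_univ _⟩
  obtain ⟨n, -, hn⟩ := Finset.exists_max_image univ (fun m => |v m|) hne
  have hvn : 0 < |v n| := lt_of_lt_of_le (abs_pos.2 hn₀) (hn n₀ (mem_univ _))
  have heig := congrFun (hA.mulVec_eigenvectorBasis j) n
  -- heig : (A *ᵥ v) n = (eigenvalues j • v) n
  have hsum : ∑ m, A n m * v m = hA.eigenvalues j * v n := by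
    simpa [Matrix.mulVec, dotProduct, hv] using heig
  have hsplit : (hA.eigenvalues j - A n n) * v n = ∑ m ∈ univ.erase n, A n m * v m := by
    rw [← Finset.add_sum_erase univ _ (mem_univ n)] at hsum
    ring_nf
    linarith [hsum]
  have habs : |hA.eigenvalues j - A n n| * |v n| ≤ r * |v n| := by
    rw [← abs_mul, hsplit]
    calc |∑ m ∈ univ.erase n, A n m * v m| ≤ ∑ m ∈ univ.erase n, |A n m * v m| :=
          Finset.abs_sum_le_sum_abs _ _
      _ ≤ ∑ m ∈ univ.erase n, |A n m| * |v n| := by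
          refine Finset.sum_le_sum fun m _ => ?_
          rw [abs_mul]
          exact mul_le_mul_of_nonneg_left (hn m (mem_univ _)) (abs_nonneg _)
      _ = (∑ m ∈ univ.erase n, |A n m|) * |v n| := by rw [Finset.sum_mul]
      _ ≤ r * |v n| := mul_le_mul_of_nonneg_right (hrow n) (abs_nonneg _)
  have h2 : |hA.eigenvalues j - A n n| ≤ r := le_of_mul_le_mul_right habs hvn
  have := abs_le.1 h2
  linarith [hdiag n, this.2]


lemma nbr_det {d : ℕ} {n m : Fin d → ℤ} (hm : (∑ i, |n i - m i|) = 1)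
    {i : Fin d} (hi : m i ≠ n i) :
    (∀ k, k ≠ i → m k = n k) ∧ |n i - m i| = 1 := by
  have hterm : ∀ j : Fin d, (0:ℤ) ≤ |n j - m j| := fun j => abs_nonneg _
  have hone : (1:ℤ) ≤ |n i - m i| := Int.one_le_abs (sub_ne_zero.2 fun h => hi (by omega))
  constructor
  · intro k hk
    by_contra hkk
    have honek : (1:ℤ) ≤ |n k - m k| := Int.one_le_abs (sub_ne_zero.2 fun h => hkk (by omega))
    have hsub : ({i, k} : Finset (Fin d)) ⊆ univ := subset_univ _
    have h2 := Finset.sum_le_sum_of_subset_of_nonneg hsub (fun j _ _ => hterm j)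
    rw [Finset.sum_pair (by exact fun h => hk (h.symm) : i ≠ k)] at h2
    omega
  · have hle : |n i - m i| ≤ ∑ j, |n j - m j| :=
      Finset.single_le_sum (fun j _ => hterm j) (mem_univ i)
    omega

lemma lap_row_sum (d L : ℕ) (hd : 1 ≤ d) (n : ↥(cube d L)) :
    ∑ m ∈ univ.erase n, |lapMat d L n m| ≤ 2 * (d : ℝ) := by
  classical
  have h1 : ∑ m ∈ univ.erase n, |lapMat d L n m| ≤ ∑ m : ↥(cube d L), |lapMat d L n m| :=
    Finset.sum_le_sum_of_subset_of_nonneg (subset_univ _) (fun m _ _ => abs_nonneg _)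
  have h2 : ∀ m : ↥(cube d L), |lapMat d L n m| = lapMat d L n m := by
    intro m; unfold lapMat; split <;> simp
  have h3 : ∑ m : ↥(cube d L), lapMat d L n m =
      ((univ.filter
        (fun m : ↥(cube d L) => (∑ i, |(n : Fin d → ℤ) i - (m : Fin d → ℤ) i|) = 1)).card : ℝ) := by
    rw [Finset.card_filter]
    push_cast
    unfold lapMat
    refine Finset.sum_congr rfl fun m _ => ?_
    split <;> simp
  have hcard : (univ.filter
      (fun m : ↥(cube d L) => (∑ i, |(n : Fin d → ℤ) i - (m : Fin d → ℤ) i|) = 1)).card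
      ≤ 2 * d := by
    have : Nonempty (Fin d) := ⟨⟨0, hd⟩⟩
    have hinj : Set.InjOn
        (fun m : ↥(cube d L) =>
          if h : ∃ i, (m : Fin d → ℤ) i ≠ (n : Fin d → ℤ) i
          then ((h.choose, decide ((n : Fin d → ℤ) h.choose < (m : Fin d → ℤ) h.choose)) : Fin d × Bool)
          else (Classical.arbitrary (Fin d), true))
        (univ.filter
          (fun m : ↥(cube d L) => (∑ i, |(n : Fin d → ℤ) i - (m : Fin d → ℤ) i|) = 1)) := by
      intro m hm m' hm' heq
      simp only [Finset.mem_coe, Finset.mem_filter, Finset.mem_univ, true_and] at hm hm'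
      have hex : ∃ i, (m : Fin d → ℤ) i ≠ (n : Fin d → ℤ) i := by
        by_contra h
        push_neg at h
        rw [Finset.sum_congr rfl (fun i _ => by rw [h i, sub_self, abs_zero])] at hm
        simp at hm
      have hex' : ∃ i, (m' : Fin d → ℤ) i ≠ (n : Fin d → ℤ) i := by
        by_contra h
        push_neg at h
        rw [Finset.sum_congr rfl (fun i _ => by rw [h i, sub_self, abs_zero])] at hm'
        simp at hm'
      simp only [dif_pos hex, dif_pos hex'] at heq
      obtain ⟨hie, hse⟩ := Prod.mk.injEq .. ▸ heq
      have hi := hex.choose_spec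
      have hi' := hex'.choose_spec
      obtain ⟨hrest, habs⟩ := nbr_det hm hi
      obtain ⟨hrest', habs'⟩ := nbr_det hm' hi'
      have hiff := decide_eq_decide.mp hse
      rw [← hie] at hi' hrest' habs' hiff
      apply Subtype.ext
      funext k
      by_cases hki : k = hex.choose
      · subst hki
        rcases (abs_eq (by norm_num : (0:ℤ) ≤ 1)).1 habs with h | h <;>
          rcases (abs_eq (by norm_num : (0:ℤ) ≤ 1)).1 habs' with h' | h' <;>
            omega
      · rw [hrest k hki, hrest' k hki]
    calc _ ≤ (univ : Finset (Fin d × Bool)).card := Finset.card_le_card_of_injOn _ (fun a _ => mem_univ _) hinj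
      _ = 2 * d := by simp [Fintype.card_prod, mul_comm]
  calc ∑ m ∈ univ.erase n, |lapMat d L n m| ≤ _ := h1
    _ ≤ 2 * (d:ℝ) := by
        rw [Finset.sum_congr rfl (fun m _ => h2 m), h3]
        exact_mod_cast hcard


lemma H_diag (d L : ℕ) (α : ℝ) (v : (Fin d → ℤ) → ℝ) (n : ↥(cube d L)) :
    (lapMat d L + potMat d L α v) n n = v n / (1 + ‖(n : Fin d → ℤ)‖) ^ α := by
  simp [lapMat, potMat, Matrix.add_apply, Matrix.diagonal_apply_eq]

lemma H_off_diag (d L : ℕ) (α : ℝ) (v : (Fin d → ℤ) → ℝ) {n m : ↥(cube d L)} (h : n ≠ m) :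
    (lapMat d L + potMat d L α v) n m = lapMat d L n m := by
  simp [potMat, Matrix.add_apply, Matrix.diagonal_apply_ne _ h]

lemma spectral_sandwich (d L : ℕ) (hd : 1 ≤ d) (α : ℝ) (v : (Fin d → ℤ) → ℝ)
    (hH : (lapMat d L + potMat d L α v).IsHermitian)
    (hne : (univ : Finset ↥(cube d L)).Nonempty) :
    univ.sup' hne (fun j : ↥(cube d L) => v j / (1 + ‖(j : Fin d → ℤ)‖) ^ α)
      ≤ univ.sup' hne hH.eigenvalues ∧
    univ.sup' hne hH.eigenvalues
      ≤ univ.sup' hne (fun j : ↥(cube d L) => v j / (1 + ‖(j : Fin d → ℤ)‖) ^ α) + 2 * d := by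
  constructor
  · refine Finset.sup'_le _ _ fun j _ => ?_
    rw [← H_diag d L α v j]
    exact diag_le_sup_eigenvalues hH hne j
  · refine Finset.sup'_le _ _ fun j _ => ?_
    refine eigenvalue_le_gershgorin hH j _ (2 * d) (fun n => ?_) (fun n => ?_)
    · rw [H_diag d L α v n]
      exact Finset.le_sup' (fun j : ↥(cube d L) => v ↑j / (1 + ‖(↑j : Fin d → ℤ)‖) ^ α) (mem_univ n)
    · calc ∑ m ∈ univ.erase n, |(lapMat d L + potMat d L α v) n m|
          = ∑ m ∈ univ.erase n, |lapMat d L n m| := by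
            refine Finset.sum_congr rfl fun m hm => ?_
            rw [H_off_diag d L α v (fun h => (Finset.mem_erase.1 hm).1 h.symm)]
        _ ≤ 2 * d := lap_row_sum d L hd n

end Matrixpart

section Prob
variable {Ω : Type*} [MeasurableSpace Ω] (P : Measure Ω) [IsProbabilityMeasure P]

lemma tail_measure (δ : ℝ) (hδ : 0 < δ) {Y : Ω → ℝ} (hmeas : Measurable Y)
    (hdist : Measure.map Y P =
      volume.withDensity
        (fun t => ENNReal.ofReal (if 1 < |t| then δ / 2 * |t| ^ (-(1 + δ)) else 0)))
    {t : ℝ} (ht : 1 ≤ t) :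
    P {ω | Y ω ≤ t} = 1 - ENNReal.ofReal (t ^ (-δ) / 2) := by
  have ht0 : (0:ℝ) < t := lt_of_lt_of_le one_pos ht
  have hmap : P {ω | Y ω ≤ t} = Measure.map Y P (Iic t) := by
    rw [Measure.map_apply hmeas measurableSet_Iic]; rfl
  have hprob : IsProbabilityMeasure (Measure.map Y P) := Measure.isProbabilityMeasure_map hmeas.aemeasurable
  have ha : (-(1 + δ)) < -1 := by linarith
  have hIoi : Measure.map Y P (Ioi t) = ENNReal.ofReal (t ^ (-δ) / 2) := by
    rw [hdist, withDensity_apply _ measurableSet_Ioi]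
    have hcong : ∀ s ∈ Ioi t,
        ENNReal.ofReal (if 1 < |s| then δ / 2 * |s| ^ (-(1 + δ)) else 0)
          = ENNReal.ofReal (δ / 2 * s ^ (-(1 + δ))) := by
      intro s hs
      have hs1 : 1 < s := lt_of_le_of_lt ht hs
      rw [if_pos (by rw [abs_of_pos (by linarith)]; exact hs1), abs_of_pos (by linarith)]
    rw [setLIntegral_congr_fun measurableSet_Ioi hcong]
    have hint : IntegrableOn (fun s => δ / 2 * s ^ (-(1 + δ))) (Ioi t) volume :=
      (integrableOn_Ioi_rpow_of_lt ha ht0).const_mul _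
    have hnn : 0 ≤ᵐ[volume.restrict (Ioi t)] (fun s => δ / 2 * s ^ (-(1 + δ))) := by
      refine (ae_restrict_iff' measurableSet_Ioi).2 (Filter.Eventually.of_forall fun s hs => ?_)
      have : (0:ℝ) < s := lt_trans ht0 hs
      positivity
    rw [← ofReal_integral_eq_lintegral_ofReal hint hnn]
    congr 1
    rw [MeasureTheory.integral_const_mul, integral_Ioi_rpow_of_lt ha ht0]
    have : (-(1 + δ) + 1) = -δ := by ring
    rw [this]
    field_simp
  have hcompl : (Iic t) = (Ioi t)ᶜ := by simp
  rw [hmap, hcompl, measure_compl measurableSet_Ioi (measure_ne_top _ _), hIoi, measure_univ]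

lemma half_bound (δ : ℝ) (hδ : 0 < δ) {Y : Ω → ℝ} (hmeas : Measurable Y)
    (hdist : Measure.map Y P =
      volume.withDensity
        (fun t => ENNReal.ofReal (if 1 < |t| then δ / 2 * |t| ^ (-(1 + δ)) else 0)))
    {t : ℝ} (ht : t ≤ 1) :
    P {ω | Y ω ≤ t} ≤ ENNReal.ofReal (1 / 2) := by
  have h1 : P {ω | Y ω ≤ t} ≤ P {ω | Y ω ≤ 1} :=
    measure_mono (fun ω (h : Y ω ≤ t) => le_trans h ht)
  have h2 := tail_measure P δ hδ hmeas hdist (le_refl 1)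
  rw [Real.one_rpow] at h2
  rw [h2] at h1
  refine le_trans h1 ?_
  have hone : (1:ℝ≥0∞) = ENNReal.ofReal 1 := by simp
  rw [hone, ← ENNReal.ofReal_sub _ (by norm_num)]
  norm_num


lemma prob_forall_le (d : ℕ) (α δ : ℝ) (hα : 0 < α) (hδ : 0 < δ)
    (X : (Fin d → ℤ) → Ω → ℝ) (hmeas : ∀ n, Measurable (X n))
    (hindep : iIndepFun X P)
    (hdist : ∀ n, Measure.map (X n) P =
      volume.withDensity
        (fun t => ENNReal.ofReal (if 1 < |t| then δ / 2 * |t| ^ (-(1 + δ)) else 0)))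
    (L : ℕ) {t : ℝ} (ht : 1 ≤ t) :
    (P {ω | ∀ n ∈ cube d L, X n ω ≤ t * (1 + ‖n‖) ^ α}).toReal
      = ∏ n ∈ cube d L, (1 - t ^ (-δ) * (1 + ‖n‖) ^ (-(α * δ)) / 2) := by
  have hnorm : ∀ n : Fin d → ℤ, (0:ℝ) ≤ ‖n‖ := fun n => norm_nonneg n
  have hbase : ∀ n : Fin d → ℤ, (1:ℝ) ≤ (1 + ‖n‖) ^ α := fun n =>
    Real.one_le_rpow (by linarith [hnorm n]) (le_of_lt hα)
  have htn : ∀ n : Fin d → ℤ, (1:ℝ) ≤ t * (1 + ‖n‖) ^ α := fun n => by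
    calc (1:ℝ) ≤ t := ht
      _ = t * 1 := by ring
      _ ≤ t * (1 + ‖n‖) ^ α :=
        mul_le_mul_of_nonneg_left (hbase n) (by linarith)
  have hset : {ω | ∀ n ∈ cube d L, X n ω ≤ t * (1 + ‖n‖) ^ α}
      = ⋂ n ∈ cube d L, X n ⁻¹' Iic (t * (1 + ‖n‖) ^ α) := by
    ext ω
    simp [Set.mem_iInter]
  have hprod := hindep.meas_biInter (S := cube d L)
    (s := fun n => X n ⁻¹' Iic (t * (1 + ‖n‖) ^ α))
    (fun n _ => ⟨Iic (t * (1 + ‖n‖) ^ α), measurableSet_Iic, rfl⟩)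
  have hfactor : ∀ n ∈ cube d L, P (X n ⁻¹' Iic (t * (1 + ‖n‖) ^ α))
      = 1 - ENNReal.ofReal (t ^ (-δ) * (1 + ‖n‖) ^ (-(α * δ)) / 2) := by
    intro n _
    have := tail_measure P δ hδ (hmeas n) (hdist n) (htn n)
    have heq : (t * (1 + ‖n‖) ^ α) ^ (-δ) = t ^ (-δ) * (1 + ‖n‖) ^ (-(α * δ)) := by
      rw [Real.mul_rpow (by linarith) (Real.rpow_nonneg (by linarith [hnorm n]) _),
        ← Real.rpow_mul (by linarith [hnorm n])]
      ring_nf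
    rw [← heq]
    exact this
  have hr_nonneg : ∀ n : Fin d → ℤ, (0:ℝ) ≤ t ^ (-δ) * (1 + ‖n‖) ^ (-(α * δ)) / 2 := by
    intro n
    have h1 : (0:ℝ) ≤ t ^ (-δ) := Real.rpow_nonneg (by linarith) _
    have h2 : (0:ℝ) ≤ (1 + ‖n‖) ^ (-(α * δ)) := Real.rpow_nonneg (by linarith [hnorm n]) _
    positivity
  have hr_le : ∀ n : Fin d → ℤ, t ^ (-δ) * (1 + ‖n‖) ^ (-(α * δ)) / 2 ≤ 1 := by
    intro n
    have h1 : t ^ (-δ) ≤ 1 := Real.rpow_le_one_of_one_le_of_nonpos ht (by linarith)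
    have h2 : (1 + ‖n‖) ^ (-(α * δ)) ≤ 1 :=
      Real.rpow_le_one_of_one_le_of_nonpos (by linarith [hnorm n]) (by nlinarith)
    have h1' : (0:ℝ) ≤ t ^ (-δ) := Real.rpow_nonneg (by linarith) _
    have h2' : (0:ℝ) ≤ (1 + ‖n‖) ^ (-(α * δ)) := Real.rpow_nonneg (by linarith [hnorm n]) _
    nlinarith
  rw [hset, hprod, Finset.prod_congr rfl hfactor, ENNReal.toReal_prod]
  refine Finset.prod_congr rfl fun n _ => ?_
  rw [← ENNReal.ofReal_one, ← ENNReal.ofReal_sub _ (hr_nonneg n),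
    ENNReal.toReal_ofReal (by linarith [hr_le n])]

end Prob


/-- If `a L n ∈ [0, ε L]`, `ε L → 0`, and `∑ a L n → c`, then `∏ (1 - a L n) → exp (-c)`. -/
lemma prod_one_sub_tendsto_exp {ι : Type*} (s : ℕ → Finset ι) (a : ℕ → ι → ℝ) (ε : ℕ → ℝ)
    (c : ℝ)
    (hbnd : ∀ᶠ L in atTop, ∀ n ∈ s L, 0 ≤ a L n ∧ a L n ≤ ε L)
    (hε : Tendsto ε atTop (𝓝 0))
    (hsum : Tendsto (fun L => ∑ n ∈ s L, a L n) atTop (𝓝 c)) :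
    Tendsto (fun L => ∏ n ∈ s L, (1 - a L n)) atTop (𝓝 (Real.exp (-c))) := by
  have hev : ∀ᶠ L in atTop, (∀ n ∈ s L, 0 ≤ a L n ∧ a L n ≤ ε L) ∧ ε L < 1/2 := by
    filter_upwards [hbnd, hε.eventually (eventually_lt_nhds (by norm_num : (0:ℝ) < 1/2))]
      with L h1 h2
    exact ⟨h1, h2⟩
  -- log sum bounds
  have hlogsum : Tendsto (fun L => ∑ n ∈ s L, Real.log (1 - a L n)) atTop (𝓝 (-c)) := by
    have hlower : Tendsto (fun L => -(1 - ε L)⁻¹ * ∑ n ∈ s L, a L n) atTop (𝓝 (-c)) := by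
      have h1 : Tendsto (fun L => -(1 - ε L)⁻¹) atTop (𝓝 (-1)) := by
        have : Tendsto (fun L => (1 - ε L)) atTop (𝓝 1) := by
          simpa using (tendsto_const_nhds.sub hε)
        simpa using (this.inv₀ (by norm_num)).neg
      simpa using h1.mul hsum
    have hupper : Tendsto (fun L => -∑ n ∈ s L, a L n) atTop (𝓝 (-c)) := hsum.neg
    refine tendsto_of_tendsto_of_tendsto_of_le_of_le' hlower hupper ?_ ?_
    · filter_upwards [hev] with L ⟨h1, h2⟩
      rw [neg_mul, neg_le]
      calc -∑ n ∈ s L, Real.log (1 - a L n) = ∑ n ∈ s L, -Real.log (1 - a L n) := by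
            rw [Finset.sum_neg_distrib]
        _ ≤ ∑ n ∈ s L, (1 - ε L)⁻¹ * a L n := by
            refine Finset.sum_le_sum fun n hn => ?_
            obtain ⟨ha0, haε⟩ := h1 n hn
            have hpos : 0 < 1 - a L n := by linarith
            have hεpos : 0 < 1 - ε L := by linarith
            rw [← Real.log_inv]
            calc Real.log (1 - a L n)⁻¹ ≤ (1 - a L n)⁻¹ - 1 :=
                  Real.log_le_sub_one_of_pos (by positivity)
              _ = a L n / (1 - a L n) := by field_simp; ring
              _ ≤ a L n / (1 - ε L) := by
                  apply div_le_div_of_nonneg_left ha0 hεpos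
                  linarith
              _ = (1 - ε L)⁻¹ * a L n := by ring
        _ = (1 - ε L)⁻¹ * ∑ n ∈ s L, a L n := by rw [Finset.mul_sum]
    · filter_upwards [hev] with L ⟨h1, h2⟩
      calc ∑ n ∈ s L, Real.log (1 - a L n) ≤ ∑ n ∈ s L, -a L n := by
            refine Finset.sum_le_sum fun n hn => ?_
            obtain ⟨ha0, haε⟩ := h1 n hn
            have hpos : 0 < 1 - a L n := by linarith
            have := Real.log_le_sub_one_of_pos hpos
            linarith
        _ = -∑ n ∈ s L, a L n := by rw [Finset.sum_neg_distrib]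
  have := (Real.continuous_exp.tendsto (-c)).comp hlogsum
  refine this.congr' ?_
  filter_upwards [hev] with L ⟨h1, h2⟩
  simp only [Function.comp_apply]
  rw [Real.exp_sum]
  refine Finset.prod_congr rfl fun n hn => ?_
  obtain ⟨ha0, haε⟩ := h1 n hn
  exact Real.exp_log (by linarith)

/-- If `a n ∈ [0,1]` and `∑_{n ∈ s L} a n → ∞` then `∏ (1 - a n) → 0`. -/
lemma prod_one_sub_tendsto_zero {ι : Type*} (s : ℕ → Finset ι) (a : ι → ℝ)
    (h0 : ∀ n, 0 ≤ a n) (h1 : ∀ n, a n ≤ 1)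
    (hsum : Tendsto (fun L => ∑ n ∈ s L, a n) atTop atTop) :
    Tendsto (fun L => ∏ n ∈ s L, (1 - a n)) atTop (𝓝 0) := by
  have hub : ∀ L, ∏ n ∈ s L, (1 - a n) ≤ Real.exp (-∑ n ∈ s L, a n) := by
    intro L
    calc ∏ n ∈ s L, (1 - a n) ≤ ∏ n ∈ s L, Real.exp (-a n) := by
          refine Finset.prod_le_prod (fun n _ => by linarith [h1 n]) (fun n _ => ?_)
          linarith [Real.add_one_le_exp (-a n)]
      _ = Real.exp (∑ n ∈ s L, -a n) := (Real.exp_sum _ _).symm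
      _ = Real.exp (-∑ n ∈ s L, a n) := by rw [Finset.sum_neg_distrib]
  have hlow : ∀ L, (0:ℝ) ≤ ∏ n ∈ s L, (1 - a n) := fun L =>
    Finset.prod_nonneg fun n _ => by linarith [h1 n]
  have hexp : Tendsto (fun L => Real.exp (-∑ n ∈ s L, a n)) atTop (𝓝 0) :=
    Real.tendsto_exp_atBot.comp (tendsto_neg_atTop_atBot.comp hsum)
  exact tendsto_of_tendsto_of_tendsto_of_le_of_le tendsto_const_nhds hexp hlow hub


lemma cube_card (d L : ℕ) : (cube d L).card = (2 * L + 1) ^ d := by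
  rw [cube, Pi.card_Icc]
  simp [Int.card_Icc]
  congr 1
  omega

lemma cube_norm_le {d L : ℕ} {n : Fin d → ℤ} (hn : n ∈ cube d L) : ‖n‖ ≤ (L : ℝ) := by
  rw [cube, Finset.mem_Icc] at hn
  have : ∀ i, ‖n i‖ ≤ (L : ℝ) := by
    intro i
    rw [Int.norm_eq_abs]
    have h1 := hn.1 i
    have h2 := hn.2 i
    simp only [Pi.natCast_apply] at *
    rw [← Int.cast_abs]
    have : |n i| ≤ (L : ℤ) := abs_le.2 ⟨h1, h2⟩
    exact_mod_cast this
  exact pi_norm_le_iff_of_nonneg (by positivity) |>.2 this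

lemma sum_decay_lower (d L : ℕ) (β : ℝ) (hβ : 0 ≤ β) :
    ((2 * (L:ℝ) + 1)) ^ ((d:ℝ) - β) ≤ ∑ n ∈ cube d L, (1 + ‖n‖) ^ (-β) := by
  have hL0 : (0:ℝ) ≤ (L:ℝ) := Nat.cast_nonneg L
  have hL1 : (1:ℝ) ≤ 2 * (L:ℝ) + 1 := by linarith
  have hterm : ∀ n ∈ cube d L, ((2 * (L:ℝ) + 1)) ^ (-β) ≤ (1 + ‖n‖) ^ (-β) := by
    intro n hn
    apply Real.rpow_le_rpow_of_nonpos (by positivity) ?_ (by linarith)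
    calc (1:ℝ) + ‖n‖ ≤ 1 + L := by linarith [cube_norm_le hn]
      _ ≤ 2 * L + 1 := by push_cast; linarith [Nat.cast_nonneg (α := ℝ) L]
  calc ((2 * (L:ℝ) + 1)) ^ ((d:ℝ) - β)
      = ((2 * (L:ℝ) + 1)) ^ (d:ℝ) * ((2 * (L:ℝ) + 1)) ^ (-β) := by
        rw [← Real.rpow_add (by positivity)]; ring_nf
    _ = (cube d L).card * ((2 * (L:ℝ) + 1)) ^ (-β) := by
        rw [cube_card, Real.rpow_natCast]
        push_cast
        ring
    _ = ∑ _n ∈ cube d L, ((2 * (L:ℝ) + 1)) ^ (-β) := by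
        rw [Finset.sum_const, nsmul_eq_mul]
    _ ≤ ∑ n ∈ cube d L, (1 + ‖n‖) ^ (-β) := Finset.sum_le_sum hterm

lemma sum_decay_atTop (d : ℕ) (β : ℝ) (hβ : 0 ≤ β) (hβd : β < d) :
    Tendsto (fun L : ℕ => ∑ n ∈ cube d L, (1 + ‖n‖) ^ (-β)) atTop atTop := by
  have hbase : Tendsto (fun L : ℕ => 2 * (L:ℝ) + 1) atTop atTop := by
    apply tendsto_atTop_add_const_right
    exact (tendsto_natCast_atTop_atTop).const_mul_atTop (by norm_num)
  have h1 : Tendsto (fun L : ℕ => ((2 * (L:ℝ) + 1)) ^ ((d:ℝ) - β)) atTop atTop :=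
    (tendsto_rpow_atTop (by linarith)).comp hbase
  exact tendsto_atTop_mono (fun L => sum_decay_lower d L β hβ) h1


end Aux

section Main
open Finset Set
open scoped ENNReal Topology

variable {Ω : Type*} [MeasurableSpace Ω]

lemma gamma_pos (d : ℕ) (α δ : ℝ) (L : ℕ) : 0 < (2 * (L:ℝ) + 1) ^ (((d:ℝ) - α * δ) / δ) :=
  Real.rpow_pos_of_pos (by positivity) _

lemma gamma_tendsto_atTop (d : ℕ) (α δ : ℝ) (hδ : 0 < δ) (h2 : α * δ < d) :
    Tendsto (fun L : ℕ => (2 * (L:ℝ) + 1) ^ (((d:ℝ) - α * δ) / δ)) atTop atTop := by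
  have hbase : Tendsto (fun L : ℕ => 2 * (L:ℝ) + 1) atTop atTop := by
    apply tendsto_atTop_add_const_right
    exact tendsto_natCast_atTop_atTop.const_mul_atTop (by norm_num)
  exact (tendsto_rpow_atTop (div_pos (by linarith) hδ)).comp hbase

lemma keyK (P : Measure Ω) [IsProbabilityMeasure P]
    (d : ℕ) (α δ b : ℝ) (hα : 0 < α) (hδ : 0 < δ) (h2 : α * δ < d)
    (X : (Fin d → ℤ) → Ω → ℝ) (hmeas : ∀ n, Measurable (X n))
    (hindep : iIndepFun X P)
    (hdist : ∀ n, Measure.map (X n) P =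
      volume.withDensity
        (fun t => ENNReal.ofReal (if 1 < |t| then δ / 2 * |t| ^ (-(1 + δ)) else 0)))
    (hb : Tendsto
      (fun L : ℕ =>
        ((2 * (L : ℝ) + 1) ^ (((d : ℝ) - α * δ) / δ)) ^ (-δ) *
          ∑ n ∈ cube d L, (1 + ‖n‖) ^ (-(α * δ)))
      atTop (𝓝 b))
    (t : ℕ → ℝ) (x : ℝ) (hx : 0 < x)
    (ht : Tendsto (fun L => t L / (2 * (L:ℝ) + 1) ^ (((d:ℝ) - α * δ) / δ)) atTop (𝓝 x)) :
    Tendsto (fun L : ℕ => (P {ω | ∀ n ∈ cube d L, X n ω ≤ t L * (1 + ‖n‖) ^ α}).toReal)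
      atTop (𝓝 (Real.exp (-(b / (2 * x ^ δ))))) := by
  set Γ : ℕ → ℝ := fun L => (2 * (L:ℝ) + 1) ^ (((d:ℝ) - α * δ) / δ) with hΓdef
  have hΓpos : ∀ L, 0 < Γ L := gamma_pos d α δ
  have hΓtop : Tendsto Γ atTop atTop := gamma_tendsto_atTop d α δ hδ h2
  have httop : Tendsto t atTop atTop := by
    have h := ht.pos_mul_atTop hx hΓtop
    exact h.congr fun L => div_mul_cancel₀ (t L) (hΓpos L).ne'
  have hev1 : ∀ᶠ L in atTop, 1 ≤ t L := httop.eventually_ge_atTop 1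
  set a : ℕ → (Fin d → ℤ) → ℝ := fun L n => t L ^ (-δ) * (1 + ‖n‖) ^ (-(α * δ)) / 2 with hadef
  set ε : ℕ → ℝ := fun L => t L ^ (-δ) / 2 with hεdef
  have hbnd : ∀ᶠ L in atTop, ∀ n ∈ cube d L, 0 ≤ a L n ∧ a L n ≤ ε L := by
    filter_upwards [hev1] with L h1L
    intro n _
    have htL : (0:ℝ) ≤ t L := by linarith
    have hnm : (0:ℝ) ≤ ‖n‖ := norm_nonneg n
    have hr1 : (0:ℝ) ≤ t L ^ (-δ) := Real.rpow_nonneg htL _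
    have hr2 : (0:ℝ) ≤ (1 + ‖n‖) ^ (-(α * δ)) := Real.rpow_nonneg (by linarith) _
    have hr3 : (1 + ‖n‖) ^ (-(α * δ)) ≤ 1 :=
      Real.rpow_le_one_of_one_le_of_nonpos (by linarith) (by nlinarith)
    refine ⟨by positivity, ?_⟩
    simp only [hadef, hεdef]
    nlinarith
  have hε : Tendsto ε atTop (𝓝 0) := by
    have h := ((tendsto_rpow_neg_atTop hδ).comp httop).div_const 2
    simpa using h
  have hS := ((ht.rpow_const (p := -δ) (Or.inl hx.ne')).div_const 2).mul hb
  have hsum : Tendsto (fun L => ∑ n ∈ cube d L, a L n) atTop (𝓝 (x ^ (-δ) / 2 * b)) := by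
    refine hS.congr' ?_
    filter_upwards [hev1] with L h1L
    have htL : (0:ℝ) < t L := lt_of_lt_of_le one_pos h1L
    have hts : t L ^ (-δ) = (t L / Γ L) ^ (-δ) * Γ L ^ (-δ) := by
      rw [← Real.mul_rpow (div_nonneg htL.le (hΓpos L).le) (hΓpos L).le,
        div_mul_cancel₀ _ (hΓpos L).ne']
    have hsum2 : ∑ n ∈ cube d L, a L n
        = t L ^ (-δ) / 2 * ∑ n ∈ cube d L, (1 + ‖n‖) ^ (-(α * δ)) := by
      rw [Finset.mul_sum]
      refine Finset.sum_congr rfl fun n _ => ?_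
      simp only [hadef]; ring
    rw [hsum2, hts]
    ring
  have hmain := prod_one_sub_tendsto_exp (fun L => cube d L) a ε (x ^ (-δ) / 2 * b)
    hbnd hε hsum
  have hval : Real.exp (-(b / (2 * x ^ δ))) = Real.exp (-(x ^ (-δ) / 2 * b)) := by
    rw [Real.rpow_neg hx.le, div_mul_eq_mul_div, inv_mul_eq_div, div_div]
    ring_nf
  rw [hval]
  refine hmain.congr' ?_
  filter_upwards [hev1] with L h1L
  exact (prob_forall_le P d α δ hα hδ X hmeas hindep hdist L h1L).symm

end Main

/-- Fréchet-type limit for the largest eigenvalue E_L^max of H_L^ω = Δ_L + V_L^ω: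
P(E_L^max/Γ_L ≤ x) → exp(-b/(2x^δ)) for x > 0, and → 0 for x ≤ 0. -/
theorem max_eigenvalue_asymptotics {Ω : Type*} [MeasurableSpace Ω]
    (P : Measure Ω) [IsProbabilityMeasure P]
    (d : ℕ) (hd : 1 ≤ d) (α δ b : ℝ) (hα : 0 < α) (hδ : 0 < δ)
    (h1 : 0 < α * δ) (h2 : α * δ < d)
    (X : (Fin d → ℤ) → Ω → ℝ) (hmeas : ∀ n, Measurable (X n))
    (hindep : iIndepFun X P)
    (hdist : ∀ n, Measure.map (X n) P =
      volume.withDensity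
        (fun t => ENNReal.ofReal (if 1 < |t| then δ / 2 * |t| ^ (-(1 + δ)) else 0)))
    (hb : Tendsto
      (fun L : ℕ =>
        ((2 * (L : ℝ) + 1) ^ (((d : ℝ) - α * δ) / δ)) ^ (-δ) *
          ∑ n ∈ cube d L, (1 + ‖n‖) ^ (-(α * δ)))
      atTop (nhds b))
    (hH : ∀ (ω : Ω) (L : ℕ), (lapMat d L + potMat d L α (fun n => X n ω)).IsHermitian)
    (hne : ∀ L : ℕ, (Finset.univ : Finset ↥(cube d L)).Nonempty)
    (x : ℝ) :
    Tendsto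
      (fun L : ℕ =>
        (P {ω | (Finset.univ.sup' (hne L) fun j => (hH ω L).eigenvalues j) /
            (2 * (L : ℝ) + 1) ^ (((d : ℝ) - α * δ) / δ) ≤ x}).toReal)
      atTop (nhds (if 0 < x then Real.exp (-(b / (2 * x ^ δ))) else 0)) := by
  classical
  set Γ : ℕ → ℝ := fun L => (2 * (L:ℝ) + 1) ^ (((d:ℝ) - α * δ) / δ) with hΓdef
  have hΓpos : ∀ L, 0 < Γ L := gamma_pos d α δ
  have hΓtop : Tendsto Γ atTop atTop := gamma_tendsto_atTop d α δ hδ h2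
  have hrpos : ∀ n : Fin d → ℤ, (0:ℝ) < (1 + ‖n‖) ^ α :=
    fun n => Real.rpow_pos_of_pos (by positivity) _
  -- The max of the potential
  set M : Ω → ℕ → ℝ := fun ω L => Finset.univ.sup' (hne L)
    (fun j : ↥(cube d L) => X (↑j) ω / (1 + ‖(↑j : Fin d → ℤ)‖) ^ α) with hMdef
  set E : Ω → ℕ → ℝ := fun ω L => Finset.univ.sup' (hne L) (hH ω L).eigenvalues with hEdef
  have hsand : ∀ ω L, M ω L ≤ E ω L ∧ E ω L ≤ M ω L + 2 * d := fun ω L =>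
    spectral_sandwich d L hd α (fun n => X n ω) (hH ω L) (hne L)
  have hMle : ∀ (ω : Ω) (L : ℕ) (c : ℝ),
      M ω L ≤ c ↔ ∀ n ∈ cube d L, X n ω ≤ c * (1 + ‖n‖) ^ α := by
    intro ω L c
    rw [hMdef]
    simp only []
    rw [Finset.sup'_le_iff]
    constructor
    · intro h n hn
      have := h ⟨n, hn⟩ (Finset.mem_univ _)
      rwa [div_le_iff₀ (hrpos n)] at this
    · intro h j _
      rw [div_le_iff₀ (hrpos _)]
      exact h (↑j) j.2
  have hPevent : ∀ L : ℕ, {ω | E ω L / Γ L ≤ x}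
      = {ω | (Finset.univ.sup' (hne L) fun j => (hH ω L).eigenvalues j) /
            (2 * (L : ℝ) + 1) ^ (((d : ℝ) - α * δ) / δ) ≤ x} := by
    intro L; rfl
  by_cases hx : 0 < x
  · rw [if_pos hx]
    set t₁ : ℕ → ℝ := fun L => x * Γ L - 2 * d with ht₁def
    set t₂ : ℕ → ℝ := fun L => x * Γ L with ht₂def
    have ht₁ : Tendsto (fun L => t₁ L / Γ L) atTop (nhds x) := by
      have h0 : Tendsto (fun L : ℕ => 2 * (d:ℝ) / Γ L) atTop (nhds 0) :=
        Tendsto.div_atTop tendsto_const_nhds hΓtop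
      have := (tendsto_const_nhds (x := x) (f := atTop (α := ℕ))).sub h0
      rw [sub_zero] at this
      refine this.congr fun L => ?_
      rw [ht₁def]
      rw [sub_div, mul_div_cancel_right₀ _ (hΓpos L).ne']
    have ht₂ : Tendsto (fun L => t₂ L / Γ L) atTop (nhds x) := by
      refine tendsto_const_nhds.congr fun L => ?_
      rw [ht₂def]
      simp only []
      rw [mul_div_assoc, div_self (hΓpos L).ne', mul_one]
    have hK₁ := keyK P d α δ b hα hδ h2 X hmeas hindep hdist hb t₁ x hx ht₁
    have hK₂ := keyK P d α δ b hα hδ h2 X hmeas hindep hdist hb t₂ x hx ht₂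
    refine tendsto_of_tendsto_of_tendsto_of_le_of_le hK₁ hK₂ ?_ ?_
    · intro L
      refine ENNReal.toReal_mono (measure_ne_top P _) (measure_mono ?_)
      intro ω hω
      simp only [Set.mem_setOf_eq] at hω ⊢
      have hM : M ω L ≤ t₁ L := (hMle ω L (t₁ L)).2 hω
      have hE : E ω L ≤ x * Γ L := by
        have h := (hsand ω L).2
        have hM' : M ω L ≤ x * Γ L - 2 * (d:ℝ) := hM
        linarith
      have hgoal : E ω L / Γ L ≤ x := by
        rw [div_le_iff₀ (hΓpos L)]
        exact hE
      exact hgoal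
    · intro L
      refine ENNReal.toReal_mono (measure_ne_top P _) (measure_mono ?_)
      intro ω hω
      have hω' : E ω L / Γ L ≤ x := hω
      rw [div_le_iff₀ (hΓpos L)] at hω'
      have hM : M ω L ≤ t₂ L := le_trans (hsand ω L).1 hω'
      exact (hMle ω L (t₂ L)).1 hM
  · rw [if_neg hx]
    push_neg at hx
    have h2d : (1:ℝ) ≤ 2 * (d:ℝ) := by
      have : (1:ℝ) ≤ (d:ℝ) := by exact_mod_cast hd
      linarith
    set aa : (Fin d → ℤ) → ℝ :=
      fun n => (2 * (d:ℝ)) ^ (-δ) * (1 + ‖n‖) ^ (-(α * δ)) / 2 with haadef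
    have haa0 : ∀ n, 0 ≤ aa n := by
      intro n
      have hr1 : (0:ℝ) ≤ (2 * (d:ℝ)) ^ (-δ) := Real.rpow_nonneg (by linarith) _
      have hr2 : (0:ℝ) ≤ (1 + ‖n‖) ^ (-(α * δ)) :=
        Real.rpow_nonneg (by positivity) _
      rw [haadef]
      positivity
    have haa1 : ∀ n, aa n ≤ 1 := by
      intro n
      have hr1 : (2 * (d:ℝ)) ^ (-δ) ≤ 1 :=
        Real.rpow_le_one_of_one_le_of_nonpos h2d (by linarith)
      have hr1' : (0:ℝ) ≤ (2 * (d:ℝ)) ^ (-δ) := Real.rpow_nonneg (by linarith) _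
      have hr2 : (1 + ‖n‖) ^ (-(α * δ)) ≤ 1 :=
        Real.rpow_le_one_of_one_le_of_nonpos (by linarith [norm_nonneg n]) (by nlinarith)
      have hr2' : (0:ℝ) ≤ (1 + ‖n‖) ^ (-(α * δ)) :=
        Real.rpow_nonneg (by positivity) _
      rw [haadef]
      simp only []
      nlinarith
    have hsumtop : Tendsto (fun L => ∑ n ∈ cube d L, aa n) atTop atTop := by
      have hc : (0:ℝ) < (2 * (d:ℝ)) ^ (-δ) / 2 :=
        div_pos (Real.rpow_pos_of_pos (by linarith) _) two_pos
      have h := (sum_decay_atTop d (α * δ) h1.le h2).const_mul_atTop hc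
      refine h.congr fun L => ?_
      rw [Finset.mul_sum]
      refine Finset.sum_congr rfl fun n _ => ?_
      rw [haadef]
      ring
    have hzero := prod_one_sub_tendsto_zero (fun L => cube d L) aa haa0 haa1 hsumtop
    have hbound : ∀ L : ℕ,
        (P {ω | (Finset.univ.sup' (hne L) fun j => (hH ω L).eigenvalues j) /
            (2 * (L : ℝ) + 1) ^ (((d : ℝ) - α * δ) / δ) ≤ x}).toReal
          ≤ ∏ n ∈ cube d L, (1 - aa n) := by
      intro L
      rw [← prob_forall_le P d α δ hα hδ X hmeas hindep hdist L h2d]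
      refine ENNReal.toReal_mono (measure_ne_top P _) (measure_mono ?_)
      intro ω hω
      have hω' : E ω L / Γ L ≤ x := hω
      rw [div_le_iff₀ (hΓpos L)] at hω'
      have hE0 : E ω L ≤ 0 :=
        le_trans hω' (mul_nonpos_of_nonpos_of_nonneg hx (hΓpos L).le)
      have hM : M ω L ≤ 2 * (d:ℝ) := by
        have := (hsand ω L).1
        linarith
      exact (hMle ω L (2 * (d:ℝ))).1 hM
    refine tendsto_of_tendsto_of_tendsto_of_le_of_le tendsto_const_nhds hzero
      (fun L => ENNReal.toReal_nonneg) hbound
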